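/- Let K ⊆ ℝ^n be a nonempty compact set, f_1, ..., f_m : K → ℝ continuous, and 0 ≤ k_1, with k_1 + k_2 ≤ m. Then min_{x ∈ K} Σ_{i=k_1+1}^{m−k_2} f_{(i)}(x) equals the minimum of (m−k_2)·t + Σ_{j=1}^m r_j − Σ_{j=1}^m v_j f_j(x) over all (x, t, r, v) with x ∈ K, t + r_j ≥ f_j(x), r_j ≥ 0, v_j ∈ {0,1}, and Σ_{j=1}^m v_j = k_1. -/

import Mathlib

open Finset

lemma sm_le {p q : ℕ} (g : Fin p → Fin q) (hg : StrictMono g) (i : Fin p) :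
    (i : ℕ) ≤ (g i : ℕ) := by
  obtain ⟨n, hn⟩ := i
  induction n with
  | zero => exact Nat.zero_le _
  | succ k IH =>
      have hk : k < p := Nat.lt_of_succ_lt hn
      have h1 : g ⟨k, hk⟩ < g ⟨k + 1, hn⟩ := hg (by simp [Fin.lt_def])
      have h2 := IH hk
      have h3 : (g ⟨k, hk⟩ : ℕ) < (g ⟨k + 1, hn⟩ : ℕ) := h1
      simp only [Fin.val_mk] at h2 ⊢
      omega

lemma card_filter_lt (m p : ℕ) (hp : p ≤ m) :
    (Finset.univ.filter fun j : Fin m => (j : ℕ) < p).card = p := by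
  rw [Finset.card_filter]
  rw [Fin.sum_univ_eq_sum_range (fun j => if j < p then 1 else 0) m]
  rw [← Finset.card_filter]
  have : (Finset.range m).filter (fun j => j < p) = Finset.range p := by
    ext j; simp; omega
  rw [this, Finset.card_range]

lemma card_filter_ge (m p : ℕ) (hp : p ≤ m) :
    (Finset.univ.filter fun j : Fin m => p ≤ (j : ℕ)).card = m - p := by
  have h1 := card_filter_lt m p hp
  have h2 := Finset.card_filter_add_card_filter_not (s := (Finset.univ : Finset (Fin m)))
    (p := fun j : Fin m => (j : ℕ) < p)
  simp only [Finset.card_univ, Fintype.card_fin, not_lt] at h2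
  omega

lemma sum_ite_lt_eq' {m p : ℕ} (hp : p ≤ m) (s : Fin m → ℝ) :
    (∑ j : Fin m, if (j : ℕ) < p then s j else 0) = ∑ i : Fin p, s (Fin.castLE hp i) := by
  rw [← Finset.sum_filter]
  have : Finset.univ.filter (fun j : Fin m => (j : ℕ) < p)
      = (Finset.univ : Finset (Fin p)).map (Fin.castLEEmb hp) := by
    ext j
    simp only [Finset.mem_filter, Finset.mem_univ, true_and, Finset.mem_map,
      Fin.castLEEmb]
    constructor
    · intro hj; exact ⟨⟨j, hj⟩, rfl⟩
    · rintro ⟨i, rfl⟩; simp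
  rw [this, Finset.sum_map]
  rfl

lemma prefix_le_subset {m p : ℕ} (hp : p ≤ m) (s : Fin m → ℝ) (hs : Monotone s)
    (T : Finset (Fin m)) (hT : T.card = p) :
    (∑ j : Fin m, if (j : ℕ) < p then s j else 0) ≤ ∑ j ∈ T, s j := by
  have hmap : T = (Finset.univ : Finset (Fin p)).map
      ⟨T.orderEmbOfFin hT, (T.orderEmbOfFin hT).injective⟩ := by
    ext j
    simp only [Finset.mem_map, Finset.mem_univ, true_and, Function.Embedding.coeFn_mk]
    have hr := T.range_orderEmbOfFin hT
    constructor
    · intro hj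
      have : j ∈ Set.range (T.orderEmbOfFin hT) := by rw [hr]; exact_mod_cast hj
      exact this
    · rintro ⟨i, rfl⟩; exact T.orderEmbOfFin_mem hT i
  rw [hmap, Finset.sum_map, sum_ite_lt_eq' hp s]
  apply Finset.sum_le_sum
  intro i _
  apply hs
  have := sm_le (T.orderEmbOfFin hT) (T.orderEmbOfFin hT).strictMono i
  rw [Fin.le_def]
  simpa using this

lemma sortedPrefix_le {m p : ℕ} (hp : p ≤ m) (a : Fin m → ℝ) (S : Finset (Fin m))
    (hS : S.card = p) :
    (∑ j : Fin m, if (j : ℕ) < p then a (Tuple.sort a j) else 0) ≤ ∑ j ∈ S, a j := by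
  have hmono : Monotone (fun j => a (Tuple.sort a j)) :=
    fun x y h => Tuple.monotone_sort a h
  have hT : (S.image ⇑(Tuple.sort a).symm).card = p := by
    rw [Finset.card_image_of_injective _ (Tuple.sort a).symm.injective, hS]
  have h := prefix_le_subset hp _ hmono (S.image ⇑(Tuple.sort a).symm) hT
  refine h.trans_eq ?_
  rw [Finset.sum_image (fun x _ y _ h => (Tuple.sort a).symm.injective h)]
  exact Finset.sum_congr rfl fun j _ => by rw [Equiv.apply_symm_apply]

lemma sortedPrefix_eq {m p : ℕ} (hp : p ≤ m) (a : Fin m → ℝ) :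
    ∃ S : Finset (Fin m), S.card = p ∧
      (∑ j : Fin m, if (j : ℕ) < p then a (Tuple.sort a j) else 0) = ∑ j ∈ S, a j := by
  refine ⟨(Finset.univ.filter fun j : Fin m => (j : ℕ) < p).image ⇑(Tuple.sort a), ?_, ?_⟩
  · rw [Finset.card_image_of_injective _ (Tuple.sort a).injective, card_filter_lt m p hp]
  · rw [Finset.sum_image (fun x _ y _ h => (Tuple.sort a).injective h), Finset.sum_filter]

lemma sum_ite_ge_eq {m p : ℕ} (s : Fin m → ℝ) :
    (∑ j : Fin m, if p ≤ (j : ℕ) then s j else 0)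
      = (∑ j, s j) - ∑ j : Fin m, if (j : ℕ) < p then s j else 0 := by
  rw [eq_sub_iff_add_eq, ← Finset.sum_add_distrib]
  refine Finset.sum_congr rfl fun j _ => ?_
  by_cases h : (j : ℕ) < p
  · simp [h, show ¬ p ≤ (j : ℕ) by omega]
  · simp [h, show p ≤ (j : ℕ) by omega]

lemma dual_ge {m k₁ k₂ : ℕ} (hk : k₁ + k₂ ≤ m) (a : Fin m → ℝ)
    (t : ℝ) (r v : Fin m → ℝ) (hr : ∀ j, 0 ≤ r j) (htr : ∀ j, a j ≤ t + r j)
    (hv : ∀ j, v j = 0 ∨ v j = 1) (hvs : (∑ j, v j) = (k₁ : ℝ)) :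
    (∑ j : Fin m, if (j : ℕ) < m - k₁ then a (Tuple.sort a j) else 0)
      - (∑ j : Fin m, if (j : ℕ) < k₂ then a (Tuple.sort a j) else 0)
    ≤ (m - k₂ : ℕ) * t + ∑ j, r j - ∑ j, v j * a j := by
  set S := Finset.univ.filter (fun j : Fin m => v j = 1) with hSdef
  have hva : ∑ j, v j * a j = ∑ j ∈ S, a j := by
    rw [Finset.sum_filter]
    refine Finset.sum_congr rfl fun j _ => ?_
    rcases hv j with h | h <;> simp [h]
  have hcard : S.card = k₁ := by
    have h : (∑ j, v j) = (S.card : ℝ) := by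
      rw [Finset.card_filter]
      push_cast
      refine Finset.sum_congr rfl fun j _ => ?_
      rcases hv j with h | h <;> simp [h]
    rw [h] at hvs
    exact_mod_cast hvs
  have hSc : Sᶜ.card = m - k₁ := by
    rw [Finset.card_compl, hcard]; simp
  have h1 : (∑ j : Fin m, if (j : ℕ) < m - k₁ then a (Tuple.sort a j) else 0) ≤ ∑ j ∈ Sᶜ, a j :=
    sortedPrefix_le (by omega) a Sᶜ hSc
  have hsplit : ∑ j ∈ Sᶜ, a j = ∑ j, a j - ∑ j ∈ S, a j := by
    rw [eq_sub_iff_add_eq, Finset.sum_compl_add_sum]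
  obtain ⟨S₀, hS₀c, hS₀⟩ := sortedPrefix_eq (show k₂ ≤ m by omega) a
  have hS₀cc : S₀ᶜ.card = m - k₂ := by rw [Finset.card_compl, hS₀c]; simp
  have h2 : ∑ j ∈ S₀ᶜ, a j ≤ (m - k₂ : ℕ) * t + ∑ j, r j := by
    calc ∑ j ∈ S₀ᶜ, a j ≤ ∑ j ∈ S₀ᶜ, (t + r j) := Finset.sum_le_sum fun j _ => htr j
      _ = (m - k₂ : ℕ) * t + ∑ j ∈ S₀ᶜ, r j := by
          rw [Finset.sum_add_distrib, Finset.sum_const, hS₀cc, nsmul_eq_mul]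
      _ ≤ (m - k₂ : ℕ) * t + ∑ j, r j := by
          have := Finset.sum_le_sum_of_subset_of_nonneg (Finset.subset_univ S₀ᶜ)
            (fun j _ _ => hr j)
          linarith
  have h3 : ∑ j ∈ S₀ᶜ, a j
      = ∑ j, a j - (∑ j : Fin m, if (j : ℕ) < k₂ then a (Tuple.sort a j) else 0) := by
    rw [eq_sub_iff_add_eq, hS₀, Finset.sum_compl_add_sum]
  rw [hva]
  linarith

lemma dual_attain {m k₁ k₂ : ℕ} (hk : k₁ + k₂ ≤ m) (a : Fin m → ℝ) :
    ∃ t : ℝ, ∃ r v : Fin m → ℝ,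
      (∀ j, 0 ≤ r j) ∧ (∀ j, a j ≤ t + r j) ∧ (∀ j, v j = 0 ∨ v j = 1) ∧
      (∑ j, v j) = (k₁ : ℝ) ∧
      (m - k₂ : ℕ) * t + ∑ j, r j - ∑ j, v j * a j
        = (∑ j : Fin m, if (j : ℕ) < m - k₁ then a (Tuple.sort a j) else 0)
          - (∑ j : Fin m, if (j : ℕ) < k₂ then a (Tuple.sort a j) else 0) := by
  rcases Nat.eq_zero_or_pos m with hm | hm
  · subst hm
    have hk1 : k₁ = 0 := by omega
    exact ⟨0, (fun _ => 0), (fun _ => 0), fun j => le_refl _, fun j => j.elim0,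
      fun j => Or.inl rfl, by simp [hk1], by simp⟩
  · set σ := Tuple.sort a with hσ
    set s : Fin m → ℝ := fun j => a (σ j) with hs
    have hmono : Monotone s := fun x y h => Tuple.monotone_sort a h
    set tq : ℕ := min k₂ (m - 1) with htq
    set t : ℝ := s ⟨tq, by omega⟩ with ht
    set r : Fin m → ℝ := fun j => max (a j - t) 0 with hrdef
    set S₁ : Finset (Fin m) :=
      (Finset.univ.filter fun j : Fin m => m - k₁ ≤ (j : ℕ)).image ⇑σ with hS₁
    set v : Fin m → ℝ := fun j => if j ∈ S₁ then 1 else 0 with hvdef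
    have hS₁c : S₁.card = k₁ := by
      rw [hS₁, Finset.card_image_of_injective _ σ.injective, card_filter_ge m (m - k₁) (by omega)]
      omega
    refine ⟨t, r, v, fun j => le_max_right _ _, fun j => by
      have := le_max_left (a j - t) 0; simp only [hrdef]; linarith,
      fun j => by by_cases h : j ∈ S₁ <;> simp [hvdef, h], ?_, ?_⟩
    · have : ∑ j, v j = (S₁.card : ℝ) := by
        rw [hvdef, Finset.sum_ite_mem, Finset.univ_inter, Finset.sum_const, nsmul_eq_mul, mul_one]
      rw [this, hS₁c]
    · -- value computation
      have hmax : ∀ j : Fin m, max (s j - t) 0 = if k₂ ≤ (j : ℕ) then s j - t else 0 := by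
        intro j
        by_cases h : k₂ ≤ (j : ℕ)
        · have h1 : (⟨tq, by omega⟩ : Fin m) ≤ j := by
            rw [Fin.le_def]; simp; omega
          have := hmono h1
          rw [if_pos h, max_eq_left (by rw [ht]; linarith [hmono h1])]
        · have h1 : j ≤ (⟨tq, by omega⟩ : Fin m) := by
            rw [Fin.le_def]; simp; omega
          have h2 := hmono h1
          rw [if_neg h, max_eq_right (by rw [ht] at *; linarith)]
      have hsumr : ∑ j, r j = ∑ j : Fin m, if k₂ ≤ (j : ℕ) then s j - t else 0 := by
        rw [hrdef]
        rw [← Equiv.sum_comp σ (fun j => max (a j - t) 0)]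
        exact Finset.sum_congr rfl fun j _ => hmax j
      have hsplit : (∑ j : Fin m, if k₂ ≤ (j : ℕ) then s j - t else 0)
          = (∑ j : Fin m, if k₂ ≤ (j : ℕ) then s j else 0)
            - (∑ j : Fin m, if k₂ ≤ (j : ℕ) then t else 0) := by
        rw [← Finset.sum_sub_distrib]
        refine Finset.sum_congr rfl fun j _ => ?_
        by_cases h : k₂ ≤ (j : ℕ) <;> simp [h]
      have hconst : (∑ j : Fin m, if k₂ ≤ (j : ℕ) then t else 0) = (m - k₂ : ℕ) * t := by
        rw [← Finset.sum_filter, Finset.sum_const, card_filter_ge m k₂ (by omega), nsmul_eq_mul]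
      have hgesum := sum_ite_ge_eq (p := k₂) s
      have hva : ∑ j, v j * a j
          = ∑ j : Fin m, if m - k₁ ≤ (j : ℕ) then s j else 0 := by
        rw [hvdef]
        have : ∀ j : Fin m, (if j ∈ S₁ then (1:ℝ) else 0) * a j
            = if j ∈ S₁ then a j else 0 := by
          intro j; by_cases h : j ∈ S₁ <;> simp [h]
        rw [Finset.sum_congr rfl fun j _ => this j, Finset.sum_ite_mem, Finset.univ_inter]
        rw [hS₁, Finset.sum_image (fun x _ y _ h => σ.injective h), Finset.sum_filter]
      have hgesum2 := sum_ite_ge_eq (p := m - k₁) s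
      have htot : ∑ j, s j = ∑ j, a j := Equiv.sum_comp σ a
      rw [hsumr, hva, hsplit, hconst]
      have e1 : (∑ j : Fin m, if (j : ℕ) < k₂ then a (Tuple.sort a j) else 0)
          = ∑ j : Fin m, if (j : ℕ) < k₂ then s j else 0 := rfl
      have e2 : (∑ j : Fin m, if (j : ℕ) < m - k₁ then a (Tuple.sort a j) else 0)
          = ∑ j : Fin m, if (j : ℕ) < m - k₁ then s j else 0 := rfl
      rw [e1, e2]
      linarith



/-- For K ⊆ ℝ^n nonempty compact, f_1,...,f_m continuous on K,
0 ≤ k₁ and k₁ + k₂ ≤ m, min_{x∈K} ∑_{i=k₁+1}^{m−k₂} f_{(i)}(x) equals the minimum of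
(m−k₂)·t + ∑_j r_j − ∑_j v_j f_j(x) over x ∈ K, t + r_j ≥ f_j(x), r_j ≥ 0,
v_j ∈ {0,1}, ∑_j v_j = k₁.  The trimmed sum is expressed via the increasing sort
`Tuple.sort`: the i-th largest (1-based) value sits at sorted index m − i, so ranks
k₁+1,…,m−k₂ correspond to sorted indices j with k₂ ≤ j < m − k₁. -/
theorem stmt_8 (n m k₁ k₂ : ℕ) (hk : k₁ + k₂ ≤ m)
    (K : Set (EuclideanSpace ℝ (Fin n))) (hK : IsCompact K) (hne : K.Nonempty)
    (f : Fin m → EuclideanSpace ℝ (Fin n) → ℝ) (hf : ∀ i, ContinuousOn (f i) K) :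
    ∃ c : ℝ,
      IsLeast {y : ℝ | ∃ x ∈ K,
        y = ∑ i : Fin m, if k₂ ≤ (i : ℕ) ∧ (i : ℕ) < m - k₁
              then (fun j => f j x) (Tuple.sort (fun j => f j x) i) else 0} c ∧
      IsLeast {y : ℝ | ∃ x ∈ K, ∃ (t : ℝ) (r v : Fin m → ℝ),
        (∀ j, 0 ≤ r j) ∧ (∀ j, f j x ≤ t + r j) ∧
        (∀ j, v j = 0 ∨ v j = 1) ∧ (∑ j : Fin m, v j) = k₁ ∧
        y = (m - k₂ : ℕ) * t + ∑ j : Fin m, r j - ∑ j : Fin m, v j * f j x} c := by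
  classical
  set a : EuclideanSpace ℝ (Fin n) → Fin m → ℝ := fun x j => f j x with ha
  set P : ℕ → EuclideanSpace ℝ (Fin n) → ℝ := fun p x =>
    ∑ j : Fin m, if (j : ℕ) < p then a x (Tuple.sort (a x) j) else 0 with hP
  set g : EuclideanSpace ℝ (Fin n) → ℝ := fun x => P (m - k₁) x - P k₂ x with hg
  -- inf' representation and continuity
  have hPinf : ∀ p : ℕ, (hp : p ≤ m) → ∀ x, P p x =
      (Finset.powersetCard p (Finset.univ : Finset (Fin m))).inf'
        (Finset.powersetCard_nonempty.2 (by simpa using hp))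
        (fun S => ∑ j ∈ S, f j x) := by
    intro p hp x
    apply le_antisymm
    · apply Finset.le_inf'
      intro S hS
      rw [Finset.mem_powersetCard_univ] at hS
      exact sortedPrefix_le hp (a x) S hS
    · obtain ⟨S, hSc, hSeq⟩ := sortedPrefix_eq hp (a x)
      have hmem : S ∈ Finset.powersetCard p (Finset.univ : Finset (Fin m)) := by
        rw [Finset.mem_powersetCard_univ]; exact hSc
      refine le_trans (Finset.inf'_le _ hmem) ?_
      rw [hP]
      exact le_of_eq hSeq.symm
  have hPcont : ∀ p : ℕ, p ≤ m → ContinuousOn (P p) K := by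
    intro p hp
    have hc : ContinuousOn (fun x =>
        (Finset.powersetCard p (Finset.univ : Finset (Fin m))).inf'
          (Finset.powersetCard_nonempty.2 (by simpa using hp))
          (fun S => ∑ j ∈ S, f j x)) K := by
      apply ContinuousOn.finset_inf'_apply
      intro S _
      exact continuousOn_finset_sum S fun j _ => hf j
    exact hc.congr fun x _ => hPinf p hp x
  have hgcont : ContinuousOn g K :=
    (hPcont (m - k₁) (by omega)).sub (hPcont k₂ (by omega))
  obtain ⟨x₀, hx₀K, hx₀min⟩ := hK.exists_isMinOn hne hgcont
  -- window sum equals g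
  have hwin : ∀ x, (∑ i : Fin m, if k₂ ≤ (i : ℕ) ∧ (i : ℕ) < m - k₁
      then (fun j => f j x) (Tuple.sort (fun j => f j x) i) else 0) = g x := by
    intro x
    rw [hg, hP]; dsimp only; rw [← Finset.sum_sub_distrib]
    refine Finset.sum_congr rfl fun j _ => ?_
    by_cases h1 : (j : ℕ) < k₂
    · have h2 : (j : ℕ) < m - k₁ := by omega
      simp [h1, h2, show ¬ k₂ ≤ (j : ℕ) by omega]
    · by_cases h2 : (j : ℕ) < m - k₁
      · simp [h1, h2, show k₂ ≤ (j : ℕ) by omega]; rfl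
      · simp [h1, h2]
  refine ⟨g x₀, ⟨⟨x₀, hx₀K, (hwin x₀).symm⟩, ?_⟩, ⟨?_, ?_⟩⟩
  · rintro y ⟨x, hx, rfl⟩
    rw [hwin x]
    exact hx₀min hx
  · -- membership in the dual set
    obtain ⟨t, r, v, hr, htr, hv, hvs, hval⟩ := dual_attain hk (a x₀)
    exact ⟨x₀, hx₀K, t, r, v, hr, htr, hv, hvs, hval.symm⟩
  · rintro y ⟨x, hx, t, r, v, hr, htr, hv, hvs, rfl⟩
    have h := dual_ge hk (a x) t r v hr htr hv hvs
    calc g x₀ ≤ g x := hx₀min hx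
      _ ≤ _ := h
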